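/- Suppose f : ℝ^n → ℝ is convex and differentiable with L-Lipschitz gradient, and {d_k} is a sequence of differentiable maps d_k : ℝ^{2n} → ℝ^n each with Jacobian Frobenius norm bounded by C. If the iterates x_{k+1} = x_k − d_k(x_k, ∇f(x_k)) converge to some minimizer x_* of f and d_k(x_*, 0) → 0 as k → ∞, then for each k there exist a matrix P_k ∈ ℝ^{n×n} and a vector b_k ∈ ℝ^n such that d_k(x_k, ∇f(x_k)) = P_k ∇f(x_k) + b_k, with ‖P_k‖ ≤ √n·C for all k and b_k → 0 as k → ∞. -/

import Mathlib

open scoped BigOperators Topology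

/-- Frobenius norm of the Jacobian of a map `d : ℝ^n × ℝ^n → ℝ^n`, the two
blocks of inputs being indexed by `Fin 2`. -/
noncomputable def jacFrobNorm2 {n : ℕ}
    (d : (Fin 2 → EuclideanSpace ℝ (Fin n)) → EuclideanSpace ℝ (Fin n))
    (z : Fin 2 → EuclideanSpace ℝ (Fin n)) : ℝ :=
  Real.sqrt (∑ i : Fin n, ∑ j : Fin 2, ∑ l : Fin n,
    (fderiv ℝ d z (Pi.single j (EuclideanSpace.single l 1)) i) ^ 2)

section aux
variable {n : ℕ}

local notation "E" => EuclideanSpace ℝ (Fin n)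

noncomputable def Jsingle (n : ℕ) (j : Fin 2) :
    EuclideanSpace ℝ (Fin n) →L[ℝ] (Fin 2 → EuclideanSpace ℝ (Fin n)) :=
  ContinuousLinearMap.pi (fun i : Fin 2 =>
    if i = j then ContinuousLinearMap.id ℝ (EuclideanSpace ℝ (Fin n)) else 0)

lemma Jsingle_apply (j : Fin 2) (y : E) : Jsingle n j y = Pi.single j y := by
  funext i
  by_cases h : i = j
  · subst h; simp [Jsingle]
  · simp [Jsingle, h, Pi.single_apply]

lemma frob_coord_bound (T : (Fin 2 → E) →L[ℝ] E) (j : Fin 2) (u : E) :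
    ‖T (Pi.single j u)‖ ≤
      Real.sqrt (∑ i : Fin n, ∑ j' : Fin 2, ∑ l : Fin n,
        (T (Pi.single j' (EuclideanSpace.single l 1)) i) ^ 2) * ‖u‖ := by
  set a : Fin n → Fin 2 → Fin n → ℝ :=
    fun i j' l => T (Pi.single j' (EuclideanSpace.single l 1)) i with ha
  set S : ℝ := ∑ i : Fin n, ∑ j' : Fin 2, ∑ l : Fin n, a i j' l ^ 2 with hS
  have hu : u = ∑ l : Fin n, u l • EuclideanSpace.single l (1:ℝ) := by
    have := (EuclideanSpace.basisFun (Fin n) ℝ).sum_repr u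
    simp only [EuclideanSpace.basisFun_apply, EuclideanSpace.basisFun_repr] at this
    exact this.symm
  have hsingle : Pi.single j u
      = ∑ l : Fin n, u l • (Pi.single j (EuclideanSpace.single l (1:ℝ)) : Fin 2 → E) := by
    conv_lhs => rw [← Jsingle_apply j u, hu, map_sum]
    simp only [map_smul, Jsingle_apply]
  have hTsum : T (Pi.single j u)
      = ∑ l : Fin n, u l • T (Pi.single j (EuclideanSpace.single l (1:ℝ))) := by
    rw [hsingle, map_sum]; simp only [map_smul]
  have hcoord : ∀ i : Fin n, T (Pi.single j u) i = ∑ l : Fin n, u l * a i j l := by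
    intro i
    calc T (Pi.single j u) i
        = (EuclideanSpace.proj (𝕜 := ℝ) i)
            (∑ l : Fin n, u l • T (Pi.single j (EuclideanSpace.single l (1:ℝ)))) := by
          rw [← hTsum]; rfl
      _ = ∑ l : Fin n, u l * a i j l := by
          rw [map_sum]
          simp only [map_smul, smul_eq_mul, ha]
          rfl
  have hu2 : ‖u‖ ^ 2 = ∑ l : Fin n, u l ^ 2 := by
    rw [EuclideanSpace.norm_eq, Real.sq_sqrt]
    · simp [sq_abs]
    · positivity
  have key : ∑ i : Fin n, (T (Pi.single j u) i) ^ 2 ≤ S * ‖u‖ ^ 2 := by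
    calc ∑ i : Fin n, (T (Pi.single j u) i) ^ 2
        ≤ ∑ i : Fin n, (∑ l : Fin n, u l ^ 2) * (∑ l : Fin n, a i j l ^ 2) := by
          apply Finset.sum_le_sum; intro i _
          rw [hcoord i]
          exact Finset.sum_mul_sq_le_sq_mul_sq _ _ _
      _ = (∑ l : Fin n, u l ^ 2) * ∑ i : Fin n, ∑ l : Fin n, a i j l ^ 2 := by
          rw [Finset.mul_sum]
      _ ≤ (∑ l : Fin n, u l ^ 2) * S := by
          apply mul_le_mul_of_nonneg_left _ (by positivity)
          rw [hS]
          apply Finset.sum_le_sum; intro i _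
          exact Finset.single_le_sum (f := fun j' => ∑ l : Fin n, a i j' l ^ 2)
            (fun _ _ => by positivity) (Finset.mem_univ j)
      _ = S * ‖u‖ ^ 2 := by rw [hu2, mul_comm]
  have hnorm : ‖T (Pi.single j u)‖
      = Real.sqrt (∑ i : Fin n, (T (Pi.single j u) i) ^ 2) := by
    rw [EuclideanSpace.norm_eq]; simp [sq_abs]
  rw [hnorm]
  calc Real.sqrt (∑ i : Fin n, (T (Pi.single j u) i) ^ 2)
      ≤ Real.sqrt (S * ‖u‖ ^ 2) := Real.sqrt_le_sqrt key
    _ = Real.sqrt S * ‖u‖ := by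
        rw [Real.sqrt_mul (by positivity), Real.sqrt_sq (norm_nonneg _)]

set_option maxHeartbeats 2000000 in
lemma lip_coord {C : ℝ} (d : (Fin 2 → E) → E) (hd : Differentiable ℝ d)
    (hC : ∀ z, jacFrobNorm2 d z ≤ C) (j : Fin 2) (c : Fin 2 → E) (y1 y2 : E) :
    ‖d (c + Pi.single j y1) - d (c + Pi.single j y2)‖ ≤ C * ‖y1 - y2‖ := by
  have hC0 : 0 ≤ C := le_trans (Real.sqrt_nonneg _) (hC 0)
  set φ : E → E := fun y => d (c + Pi.single j y) with hφ
  have hder : ∀ y : E,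
      HasFDerivAt φ ((fderiv ℝ d (c + Pi.single j y)).comp (Jsingle n j)) y := by
    intro y
    have h1 : HasFDerivAt (fun y : E => c + Pi.single j y) (Jsingle n j) y := by
      have := (hasFDerivAt_const c y).add (Jsingle n j).hasFDerivAt
      simpa [Jsingle_apply] using this
    exact ((hd _).hasFDerivAt.comp y h1)
  have hbound : ∀ y : E, ‖fderiv ℝ φ y‖ ≤ C := by
    intro y
    rw [(hder y).fderiv]
    apply ContinuousLinearMap.opNorm_le_bound _ hC0
    intro u
    set z : Fin 2 → E := c + Pi.single j y with hz
    have h1 := frob_coord_bound (fderiv ℝ d z) j u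
    have h2 := hC z
    rw [jacFrobNorm2] at h2
    have e1 : (fderiv ℝ d z).comp (Jsingle n j) u = fderiv ℝ d z (Pi.single j u) := by
      rw [ContinuousLinearMap.comp_apply, Jsingle_apply]
    rw [e1]
    exact le_trans h1 (mul_le_mul_of_nonneg_right h2 (norm_nonneg u))
  have h := convex_univ.norm_image_sub_le_of_norm_fderiv_le
    (f := φ) (fun z _ => (hder z).differentiableAt)
    (fun z _ => hbound z) (Set.mem_univ y2) (Set.mem_univ y1)
  simpa [hφ] using h

end aux

/-- Theorem 2.4: structure of good update rules in the
smooth case. -/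
theorem stmt2 {n : ℕ} (C : ℝ) (L : NNReal) (f : EuclideanSpace ℝ (Fin n) → ℝ)
    (hfconv : ConvexOn ℝ Set.univ f)
    (hfdiff : Differentiable ℝ f)
    (hflip : LipschitzWith L (gradient f))
    (d : ℕ → (Fin 2 → EuclideanSpace ℝ (Fin n)) → EuclideanSpace ℝ (Fin n))
    (hddiff : ∀ k, Differentiable ℝ (d k))
    (hdC : ∀ k z, jacFrobNorm2 (d k) z ≤ C)
    (x : ℕ → EuclideanSpace ℝ (Fin n))
    (hx : ∀ k, x (k + 1) = x k - d k ![x k, gradient f (x k)])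
    (xs : EuclideanSpace ℝ (Fin n))
    (hmin : ∀ y, f xs ≤ f y)
    (hconv : Filter.Tendsto x Filter.atTop (𝓝 xs))
    (hfp : Filter.Tendsto (fun k => d k ![xs, 0]) Filter.atTop (𝓝 0)) :
    ∃ (P : ℕ → (EuclideanSpace ℝ (Fin n) →L[ℝ] EuclideanSpace ℝ (Fin n)))
      (b : ℕ → EuclideanSpace ℝ (Fin n)),
      (∀ k, d k ![x k, gradient f (x k)] = P k (gradient f (x k)) + b k) ∧
      (∀ k, ‖P k‖ ≤ Real.sqrt n * C) ∧
      Filter.Tendsto b Filter.atTop (𝓝 0) := by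
  classical
  have hC0 : 0 ≤ C := le_trans (Real.sqrt_nonneg _) (hdC 0 0)
  set g : ℕ → EuclideanSpace ℝ (Fin n) := fun k => gradient f (x k) with hg
  have harg1 : ∀ (a y : EuclideanSpace ℝ (Fin n)),
      (![a, y] : Fin 2 → EuclideanSpace ℝ (Fin n)) = (Pi.single (0 : Fin 2) a : Fin 2 → EuclideanSpace ℝ (Fin n)) + Pi.single (1 : Fin 2) y := by
    intro a y; funext i; fin_cases i <;> simp
  have harg0 : ∀ (y : EuclideanSpace ℝ (Fin n)),
      (![y, 0] : Fin 2 → EuclideanSpace ℝ (Fin n)) = 0 + (Pi.single (0 : Fin 2) y : Fin 2 → EuclideanSpace ℝ (Fin n)) := by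
    intro y; funext i; fin_cases i <;> simp [Pi.single_apply]
  have lip2 : ∀ k (a y1 y2 : EuclideanSpace ℝ (Fin n)),
      ‖d k ![a, y1] - d k ![a, y2]‖ ≤ C * ‖y1 - y2‖ := by
    intro k a y1 y2
    have h := lip_coord (d k) (hddiff k) (hdC k) 1 (Pi.single (0 : Fin 2) a) y1 y2
    rw [harg1 a y1, harg1 a y2]
    exact h
  have lip1 : ∀ k (y1 y2 : EuclideanSpace ℝ (Fin n)),
      ‖d k ![y1, 0] - d k ![y2, 0]‖ ≤ C * ‖y1 - y2‖ := by
    intro k y1 y2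
    have h := lip_coord (d k) (hddiff k) (hdC k) 0 0 y1 y2
    rw [harg0 y1, harg0 y2]
    exact h
  set w : ℕ → EuclideanSpace ℝ (Fin n) :=
    fun k => d k ![x k, g k] - d k ![x k, 0] with hw
  set b : ℕ → EuclideanSpace ℝ (Fin n) := fun k => d k ![x k, 0] with hb
  set P : ℕ → (EuclideanSpace ℝ (Fin n) →L[ℝ] EuclideanSpace ℝ (Fin n)) :=
    fun k => if h : g k = 0 then 0 else
      ((‖g k‖ ^ 2)⁻¹ • (innerSL ℝ (g k))).smulRight (w k) with hP
  refine ⟨P, b, ?_, ?_, ?_⟩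
  · intro k
    by_cases h : g k = 0
    · simp only [hP, dif_pos h, ContinuousLinearMap.zero_apply, zero_add, hb]
      have h' : gradient f (x k) = 0 := h
      rw [h']
    · simp only [hP, dif_neg h]
      have key : (((‖g k‖ ^ 2)⁻¹ • (innerSL ℝ (g k))).smulRight (w k)) (g k) = w k := by
        rw [ContinuousLinearMap.smulRight_apply, ContinuousLinearMap.smul_apply,
          innerSL_apply_apply, real_inner_self_eq_norm_sq]
        rw [smul_eq_mul, inv_mul_cancel₀ (pow_ne_zero 2 (norm_ne_zero_iff.mpr h)), one_smul]
      rw [key, hw, hb]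
      module
  · intro k
    by_cases h : g k = 0
    · simp only [hP, dif_pos h, norm_zero]
      positivity
    · have hn1 : 1 ≤ (n : ℝ) := by
        by_contra hn
        push_neg at hn
        have hn0 : n = 0 := Nat.lt_one_iff.mp (by exact_mod_cast hn)
        subst hn0
        exact h (Subsingleton.elim _ _)
      have hwle : ‖w k‖ ≤ C * ‖g k‖ := by
        have := lip2 k (x k) (g k) 0
        simpa using this
      have hPle : ‖P k‖ ≤ C := by
        simp only [hP, dif_neg h]
        apply ContinuousLinearMap.opNorm_le_bound _ hC0
        intro v
        have hgn : ‖g k‖ ≠ 0 := norm_ne_zero_iff.mpr h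
        rw [ContinuousLinearMap.smulRight_apply, ContinuousLinearMap.smul_apply,
          innerSL_apply_apply, norm_smul, smul_eq_mul, Real.norm_eq_abs, abs_mul,
          abs_of_nonneg (by positivity : (0:ℝ) ≤ (‖g k‖ ^ 2)⁻¹)]
        calc (‖g k‖ ^ 2)⁻¹ * |(inner ℝ (g k) v : ℝ)| * ‖w k‖
            ≤ (‖g k‖ ^ 2)⁻¹ * (‖g k‖ * ‖v‖) * (C * ‖g k‖) := by
              apply mul_le_mul _ hwle (norm_nonneg _) (by positivity)
              exact mul_le_mul_of_nonneg_left (abs_real_inner_le_norm _ _) (by positivity)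
          _ = C * ‖v‖ := by field_simp
      calc ‖P k‖ ≤ C := hPle
        _ = 1 * C := (one_mul C).symm
        _ ≤ Real.sqrt n * C := by
          apply mul_le_mul_of_nonneg_right _ hC0
          rw [show (1:ℝ) = Real.sqrt 1 from (Real.sqrt_one).symm]
          exact Real.sqrt_le_sqrt hn1
  · have hle : ∀ k, ‖b k‖ ≤ C * ‖x k - xs‖ + ‖d k ![xs, 0]‖ := by
      intro k
      have h1 : b k = (d k ![x k, 0] - d k ![xs, 0]) + d k ![xs, 0] := by
        rw [hb]; module
      rw [h1]
      exact le_trans (norm_add_le _ _) (add_le_add (lip1 k (x k) xs) le_rfl)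
    have ht : Filter.Tendsto (fun k => C * ‖x k - xs‖ + ‖d k ![xs, 0]‖)
        Filter.atTop (𝓝 0) := by
      have t1 : Filter.Tendsto (fun k => ‖x k - xs‖) Filter.atTop (𝓝 0) := by
        have := (tendsto_sub_nhds_zero_iff.mpr hconv).norm
        simpa using this
      have t2 : Filter.Tendsto (fun k => ‖d k ![xs, 0]‖) Filter.atTop (𝓝 0) := by
        simpa using hfp.norm
      have := ((tendsto_const_nhds (x := C)).mul t1).add t2
      simpa using this
    exact squeeze_zero_norm hle ht
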